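/- There exist absolute constants c > 0 and n₀ such that for every integer n ≥ n₀ and every real Δ with √n ≤ Δ ≤ n, the n-point set S_Δ = { (t/n, cos(t/Δ), sin(t/Δ)) : t ∈ {1, …, n} } satisfies: any two distinct points of S_Δ whose parameters t, u satisfy |t − u| < 2πΔ form a Delaunay edge of S_Δ; consequently S_Δ has at least c·nΔ Delaunay edges, and the spread of S_Δ is Θ(Δ). -/

import Mathlib

noncomputable section
open scoped Classical ENNReal Pointwise
open MeasureTheory Real

/-- Points of `ℝ³` as Euclidean space. -/
abbrev E3 : Type := EuclideanSpace ℝ (Fin 3)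

/-- The point `(x, y, z) ∈ ℝ³`. -/
def mk3 (x y z : ℝ) : E3 := (WithLp.equiv 2 (Fin 3 → ℝ)).symm ![x, y, z]

/-- `p` and `q` form a Delaunay edge of the finite set `S`: they are distinct points of `S`
lying on a sphere having no point of `S` in its interior. -/
def IsDelaunayEdge (S : Finset E3) (p q : E3) : Prop :=
  p ∈ S ∧ q ∈ S ∧ p ≠ q ∧
    ∃ (c : E3) (ρ : ℝ), 0 < ρ ∧ dist c p = ρ ∧ dist c q = ρ ∧ ∀ s ∈ S, ρ ≤ dist c s

/-- The number of (unordered) Delaunay edges of `S`. -/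
def delaunayEdgeCount (S : Finset E3) : ℕ :=
  Set.ncard {pq : E3 × E3 | IsDelaunayEdge S pq.1 pq.2} / 2

/-- The minimum pairwise distance of a finite point set. -/
def minPairDist (S : Finset E3) : ℝ :=
  sInf {d : ℝ | ∃ p ∈ S, ∃ q ∈ S, p ≠ q ∧ d = dist p q}

/-- The spread of a finite point set: diameter divided by minimum pairwise distance. -/
def spread (S : Finset E3) : ℝ := Metric.diam (S : Set E3) / minPairDist S
/-- The `t`-th point of the helical sample of pitch `Δ/n`: `(t/n, cos(t/Δ), sin(t/Δ))`. -/
def helixPointD (n : ℕ) (Δ : ℝ) (t : ℕ) : E3 :=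
  mk3 ((t : ℝ) / n) (Real.cos (t / Δ)) (Real.sin (t / Δ))

/-- The helical sample `S_Δ = { (t/n, cos(t/Δ), sin(t/Δ)) : t ∈ {1, …, n} }`. -/
def helixSampleD (n : ℕ) (Δ : ℝ) : Finset E3 := (Finset.Icc 1 n).image (helixPointD n Δ)

lemma dist_mk3_sq (x y z x' y' z' : ℝ) :
    dist (mk3 x y z) (mk3 x' y' z') ^ 2 = (x-x')^2 + (y-y')^2 + (z-z')^2 := by
  rw [EuclideanSpace.dist_eq, Real.sq_sqrt (by positivity)]
  simp [mk3, Fin.sum_univ_three, WithLp.equiv_symm_apply, PiLp.toLp_apply, Real.dist_eq, sq_abs]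

lemma helix_apply_zero (n : ℕ) (Δ : ℝ) (t : ℕ) : (helixPointD n Δ t) 0 = (t:ℝ)/n := rfl

lemma helix_inj {n : ℕ} (hn : 0 < n) {Δ : ℝ} {t u : ℕ}
    (h : helixPointD n Δ t = helixPointD n Δ u) : t = u := by
  have h0 := congrArg (fun p : E3 => p 0) h
  simp only [helix_apply_zero] at h0
  have hnR : (0:ℝ) < n := by exact_mod_cast hn
  have : (t:ℝ) = u := by
    field_simp at h0; exact_mod_cast h0
  exact_mod_cast this

lemma helix_center_dist_sq (n : ℕ) (Δ R m : ℝ) (s : ℕ) :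
    dist (mk3 (m/n) (-R*Real.cos (m/Δ)) (-R*Real.sin (m/Δ))) (helixPointD n Δ s) ^ 2
      = (((s:ℝ)-m)/n)^2 + 1 + R^2 + 2*R*Real.cos (((s:ℝ)-m)/Δ) := by
  rw [helixPointD, dist_mk3_sq, show ((s:ℝ)-m)/Δ = s/Δ - m/Δ by ring, Real.cos_sub]
  have p1 := Real.sin_sq_add_cos_sq (m/Δ)
  have p2 := Real.sin_sq_add_cos_sq ((s:ℝ)/Δ)
  linear_combination (R^2) * p1 + p2

lemma helix_dist_sq (n : ℕ) (Δ : ℝ) (t u : ℕ) :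
    dist (helixPointD n Δ t) (helixPointD n Δ u) ^ 2
      = (((t:ℝ)-u)/n)^2 + 2 - 2*Real.cos (((t:ℝ)-u)/Δ) := by
  rw [helixPointD, helixPointD, dist_mk3_sq, show ((t:ℝ)-u)/Δ = t/Δ - u/Δ by ring,
    Real.cos_sub]
  have p1 := Real.sin_sq_add_cos_sq ((t:ℝ)/Δ)
  have p2 := Real.sin_sq_add_cos_sq ((u:ℝ)/Δ)
  linear_combination p1 + p2

lemma L1 {t : ℝ} (h0 : 0 ≤ t) (h1 : t ≤ π) : t * Real.cos t ≤ Real.sin t := by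
  rcases le_or_gt t (π/2) with h | h
  · rcases eq_or_lt_of_le h0 with rfl | h0'
    · simp
    · rcases eq_or_lt_of_le h with h2 | h2
      · subst h2; rw [Real.cos_pi_div_two, Real.sin_pi_div_two]; norm_num
      · have ht := Real.lt_tan h0' h2
        have hc : 0 < Real.cos t := Real.cos_pos_of_mem_Ioo ⟨by linarith [Real.pi_pos], h2⟩
        rw [Real.tan_eq_sin_div_cos, lt_div_iff₀ hc] at ht
        linarith
  · have hc : Real.cos t ≤ 0 := Real.cos_nonpos_of_pi_div_two_le_of_le h.le (by linarith [Real.pi_pos])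
    have hs : 0 ≤ Real.sin t := Real.sin_nonneg_of_nonneg_of_le_pi h0 h1
    nlinarith

-- sinc antitone on [0, π]
lemma L2 {y x : ℝ} (hy : 0 ≤ y) (hyx : y ≤ x) (hx : x ≤ π) : y * Real.sin x ≤ x * Real.sin y := by
  have hsy : 0 ≤ Real.sin y := Real.sin_nonneg_of_nonneg_of_le_pi hy (le_trans hyx hx)
  have key : Real.sin x - Real.sin y = 2 * Real.sin ((x - y)/2) * Real.cos ((x + y)/2) :=
    Real.sin_sub_sin x y
  rcases le_or_gt (Real.cos ((x+y)/2)) 0 with hc | hc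
  · have hsh : 0 ≤ Real.sin ((x-y)/2) :=
      Real.sin_nonneg_of_nonneg_of_le_pi (by linarith) (by linarith [Real.pi_pos])
    have : Real.sin x ≤ Real.sin y := by nlinarith
    nlinarith
  · have h1 : Real.sin ((x-y)/2) ≤ (x-y)/2 := Real.sin_le (by linarith)
    have h2 : Real.cos ((x+y)/2) ≤ Real.cos y := by
      apply Real.cos_le_cos_of_nonneg_of_le_pi hy (by linarith) (by linarith)
    have h3 : Real.sin x ≤ Real.sin y + (x - y) * Real.cos y := by nlinarith
    have h4 : y * Real.cos y ≤ Real.sin y := L1 hy (le_trans hyx hx)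
    nlinarith

lemma keyIneq {a x : ℝ} (ha0 : 0 < a) (haπ : a < π) (hx : 0 ≤ x) :
    0 ≤ Real.sin a * (x^2 - a^2) + 2*a*(Real.cos x - Real.cos a) := by
  have hπ := Real.pi_pos
  rcases le_or_gt x (2*π - a) with hcase | hcase
  · set u := (x+a)/2 with hu_def
    set v := (x-a)/2 with hv_def
    have hcc : Real.cos x - Real.cos a = -2 * Real.sin u * Real.sin v := Real.cos_sub_cos x a
    have hau : a = u - v := by rw [hu_def, hv_def]; ring
    have hxa : x^2 - a^2 = 4*u*v := by rw [hu_def, hv_def]; ring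
    have hu0 : 0 < u := by rw [hu_def]; linarith
    have huπ : u ≤ π := by rw [hu_def]; linarith
    have hsu : 0 ≤ Real.sin u := Real.sin_nonneg_of_nonneg_of_le_pi hu0.le huπ
    rw [hcc, hxa]
    rcases le_or_gt 0 v with hv | hv
    · have hvπ : v ≤ π := by rw [hv_def]; linarith
      have hsv : 0 ≤ Real.sin v := Real.sin_nonneg_of_nonneg_of_le_pi hv hvπ
      have hsvle : Real.sin v ≤ v := Real.sin_le hv
      have l2 : a * Real.sin u ≤ u * Real.sin a := by
        apply L2 ha0.le (by rw [hau]; linarith) huπ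
      have hsa : 0 ≤ Real.sin a := Real.sin_nonneg_of_nonneg_of_le_pi ha0.le haπ.le
      nlinarith [mul_le_mul_of_nonneg_left l2 hv, mul_nonneg (mul_nonneg ha0.le hsu) (sub_nonneg.2 hsvle)]
    · set w := -v with hw_def
      have hw0 : 0 < w := by rw [hw_def]; linarith
      have hwπ : w ≤ π := by rw [hw_def, hv_def]; linarith
      have hauw : a = u + w := by rw [hw_def] at *; rw [hau]; ring
      have hsw : 0 ≤ Real.sin w := Real.sin_nonneg_of_nonneg_of_le_pi hw0.le hwπ
      have hL1u : u * Real.cos u ≤ Real.sin u := L1 hu0.le huπ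
      have hL1w : w * Real.cos w ≤ Real.sin w := L1 hw0.le hwπ
      have hsv : Real.sin v = -Real.sin w := by rw [hw_def]; simp
      have hsa : Real.sin a = Real.sin u * Real.cos w + Real.cos u * Real.sin w := by
        rw [hauw]; exact Real.sin_add u w
      rw [hsv, hsa, hauw]
      have h1 : 0 ≤ u * Real.sin u * (Real.sin w - w * Real.cos w) :=
        mul_nonneg (mul_nonneg hu0.le hsu) (by linarith)
      have h2 : 0 ≤ w * Real.sin w * (Real.sin u - u * Real.cos u) :=
        mul_nonneg (mul_nonneg hw0.le hsw) (by linarith)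
      have hvw : v = -w := by rw [hw_def]; ring
      rw [hvw]; nlinarith [h1, h2]
  · -- far case
    have h2πa : 0 ≤ 2*π - a := by linarith
    have hx2 : (2*π - a)^2 ≤ x^2 := by nlinarith
    have hcx : -1 ≤ Real.cos x := Real.neg_one_le_cos x
    have hca : Real.cos a ≤ 1 := Real.cos_le_one a
    have hsa : 0 ≤ Real.sin a := Real.sin_nonneg_of_nonneg_of_le_pi ha0.le haπ.le
    have hmain : 2*a*(1 + Real.cos a) ≤ 4*π*(π-a) * Real.sin a := by
      set b := a/2 with hb_def
      have hb0 : 0 < b := by rw [hb_def]; linarith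
      have hbπ : b < π/2 := by rw [hb_def]; linarith
      have hcb : 0 ≤ Real.cos b := Real.cos_nonneg_of_mem_Icc ⟨by linarith, hbπ.le⟩
      have hjordan : 2/π * b ≤ Real.sin b := Real.mul_le_sin hb0.le hbπ.le
      have hjordan' : 2*b ≤ π * Real.sin b := by
        rw [div_mul_eq_mul_div, div_le_iff₀ hπ] at hjordan; linarith
      have hcosb : Real.cos b ≤ π/2 - b := by
        rw [← Real.sin_pi_div_two_sub]; exact Real.sin_le (by linarith)
      have hsina : Real.sin a = 2 * Real.sin b * Real.cos b := by
        rw [hb_def, ← Real.sin_two_mul]; ring_nf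
      have hcosa : 1 + Real.cos a = 2 * Real.cos b ^ 2 := by
        have h := Real.cos_sq b
        rw [show 2*b = a by rw [hb_def]; ring] at h
        linarith
      rw [hsina, hcosa]
      have hab : a = 2*b := by rw [hb_def]; ring
      rw [hab]
      nlinarith [mul_nonneg (sub_nonneg.2 hcosb) hcb, mul_le_mul_of_nonneg_left hjordan' (by linarith : (0:ℝ) ≤ π - 2*b), mul_le_mul_of_nonneg_left hcosb hb0.le, mul_nonneg hcb hcb, sq_nonneg (Real.cos b), mul_le_mul_of_nonneg_right hjordan' hcb]
    nlinarith [mul_le_mul_of_nonneg_left hx2 hsa]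

set_option maxHeartbeats 2000000 in
lemma delaunay_main (n : ℕ) (hn : 0 < n) (Δ : ℝ) (hΔ0 : 0 < Δ)
    (t u : ℕ) (ht : t ∈ Finset.Icc 1 n) (hu : u ∈ Finset.Icc 1 n) (hne : t ≠ u)
    (hclose : |(t:ℝ) - (u:ℝ)| < 2 * π * Δ) :
    IsDelaunayEdge (helixSampleD n Δ) (helixPointD n Δ t) (helixPointD n Δ u) := by
  have hπ := Real.pi_pos
  have hnR : (0:ℝ) < n := by exact_mod_cast hn
  set m : ℝ := ((t:ℝ)+u)/2 with hm_def
  set d : ℝ := |(t:ℝ)-u|/2 with hd_def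
  have htu : (t:ℝ) ≠ (u:ℝ) := fun h => hne (by exact_mod_cast h)
  have hd0 : 0 < d := by
    rw [hd_def]
    have : 0 < |(t:ℝ)-u| := abs_pos.2 (sub_ne_zero.2 htu)
    linarith
  set a : ℝ := d/Δ with ha_def
  have ha0 : 0 < a := div_pos hd0 hΔ0
  have haπ : a < π := by
    rw [ha_def, div_lt_iff₀ hΔ0, hd_def]
    linarith
  have hsa : 0 < Real.sin a := Real.sin_pos_of_pos_of_lt_pi ha0 haπ
  set R : ℝ := a * Δ^2 / (Real.sin a * n^2) with hR_def
  have hR0 : 0 < R := by positivity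
  set c : E3 := mk3 (m/n) (-R*Real.cos (m/Δ)) (-R*Real.sin (m/Δ)) with hc_def
  have hds : ∀ s : ℕ, dist c (helixPointD n Δ s) ^ 2
      = (((s:ℝ)-m)/n)^2 + 1 + R^2 + 2*R*Real.cos (((s:ℝ)-m)/Δ) :=
    fun s => helix_center_dist_sq n Δ R m s
  -- rewrite the t-distance
  have htm : (t:ℝ) - m = ((t:ℝ)-u)/2 := by rw [hm_def]; ring
  have habs : ∀ w : ℝ, Real.cos (w/Δ) = Real.cos (|w|/Δ) := by
    intro w
    rw [← Real.cos_abs (w/Δ), abs_div, abs_of_pos hΔ0]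
  have hct : Real.cos (((t:ℝ)-m)/Δ) = Real.cos a := by
    rw [habs, htm, abs_div, ha_def, hd_def]
    norm_num
  have ht2 : (((t:ℝ)-m))^2 = (a*Δ)^2 := by
    have hda : a*Δ = d := by rw [ha_def]; field_simp
    rw [hda, htm, hd_def, ← sq_abs (((t:ℝ)-u)/2), abs_div]
    norm_num
  have hmin : ∀ s : ℕ, dist c (helixPointD n Δ t) ^2 ≤ dist c (helixPointD n Δ s) ^2 := by
    intro s
    rw [hds t, hds s]
    set w : ℝ := (s:ℝ) - m with hw_def
    set x : ℝ := |w|/Δ with hx_def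
    have hx0 : 0 ≤ x := by positivity
    have hcw : Real.cos (w/Δ) = Real.cos x := habs w
    have hw2 : w^2 = (x*Δ)^2 := by
      rw [hx_def, div_mul_cancel₀ _ (ne_of_gt hΔ0), sq_abs]
    have key := keyIneq ha0 haπ hx0
    have hfac : (0:ℝ) < Δ^2/(Real.sin a * n^2) := by positivity
    have expand : (Δ^2/(Real.sin a * n^2)) * (Real.sin a*(x^2-a^2) + 2*a*(Real.cos x - Real.cos a))
        = ((x*Δ)/n)^2 + 2*R*Real.cos x - (((a*Δ)/n)^2 + 2*R*Real.cos a) := by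
      rw [hR_def]; field_simp; ring
    have hkey2 : ((a*Δ)/n)^2 + 2*R*Real.cos a ≤ ((x*Δ)/n)^2 + 2*R*Real.cos x := by
      nlinarith [mul_nonneg hfac.le key]
    have e1 : (((t:ℝ)-m)/n)^2 = ((a*Δ)/n)^2 := by rw [div_pow, div_pow, ht2]
    have e2 : (w/n)^2 = ((x*Δ)/n)^2 := by rw [div_pow, div_pow, hw2]
    rw [e1, e2, hct, hcw]
    linarith
  set ρ := dist c (helixPointD n Δ t) with hρ_def
  have hρsq : ρ^2 = (((t:ℝ)-m)/n)^2 + 1 + R^2 + 2*R*Real.cos a := by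
    rw [hρ_def, hds t, hct]
  have hca : -1 < Real.cos a := by
    have h := Real.cos_sq (a/2)
    have hcpos : 0 < Real.cos (a/2) := Real.cos_pos_of_mem_Ioo ⟨by linarith, by linarith⟩
    rw [show 2*(a/2) = a by ring] at h
    nlinarith
  have hρpos : 0 < ρ := by
    have h2 : 0 < ρ^2 := by nlinarith [sq_nonneg (((t:ℝ)-m)/n), sq_nonneg (1-R)]
    have h0 : 0 ≤ ρ := by rw [hρ_def]; exact dist_nonneg
    rcases lt_or_eq_of_le h0 with h | h
    · exact h
    · exfalso; rw [← h] at h2; simp at h2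
  have hmem : ∀ v : ℕ, v ∈ Finset.Icc 1 n → helixPointD n Δ v ∈ helixSampleD n Δ := by
    intro v hv; exact Finset.mem_image_of_mem _ hv
  refine ⟨hmem t ht, hmem u hu, fun h => hne (helix_inj hn h), c, ρ, hρpos, rfl, ?_, ?_⟩
  · have hsq : dist c (helixPointD n Δ u) ^ 2 = ρ^2 := by
      rw [hds u, hρsq]
      have h1 : ((u:ℝ)-m) = -((t:ℝ)-m) := by rw [hm_def]; ring
      rw [h1, ← hct]
      have : (-(((t:ℝ)-m))/Δ) = -((((t:ℝ)-m))/Δ) := by ring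
      rw [this, Real.cos_neg]
      ring
    have h1 : Real.sqrt (dist c (helixPointD n Δ u)^2) = Real.sqrt (ρ^2) := by rw [hsq]
    rwa [Real.sqrt_sq dist_nonneg, Real.sqrt_sq (le_of_lt hρpos)] at h1
  · intro p hp
    obtain ⟨s, hs, rfl⟩ := Finset.mem_image.1 hp
    exact le_of_pow_le_pow_left₀ two_ne_zero dist_nonneg (hmin s)


set_option maxHeartbeats 2000000 in
lemma count_lemma (n : ℕ) (hn : 16 ≤ n) (Δ : ℝ) (hΔs : Real.sqrt n ≤ Δ) (hΔn : Δ ≤ n) :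
    (1/32 : ℝ) * n * Δ ≤ (delaunayEdgeCount (helixSampleD n Δ) : ℝ) := by
  have hπ := Real.pi_pos
  have hπ2 : (2:ℝ) ≤ π := Real.two_le_pi
  have hn0 : 0 < n := by omega
  have hnR : (0:ℝ) < n := by exact_mod_cast hn0
  have hΔ1 : (1:ℝ) ≤ Δ := by
    refine le_trans ?_ hΔs
    rw [show (1:ℝ) = Real.sqrt 1 by simp]
    exact Real.sqrt_le_sqrt (by exact_mod_cast hn0)
  have hΔ0 : (0:ℝ) < Δ := by linarith
  set K : ℕ := min (⌊Δ⌋₊) (n/2) with hK_def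
  have hK1 : 1 ≤ K := le_min (Nat.le_floor (by exact_mod_cast hΔ1)) (by omega)
  have hKn2 : K ≤ n/2 := min_le_right _ _
  have hKn : K ≤ n := by omega
  set S := helixSampleD n Δ with hS_def
  set D := {pq : E3 × E3 | IsDelaunayEdge S pq.1 pq.2} with hD_def
  set T : Finset (ℕ × ℕ) := Finset.Icc 1 (n-K) ×ˢ Finset.Icc 1 K with hT_def
  set f : ℕ × ℕ → E3 × E3 := fun p => (helixPointD n Δ p.1, helixPointD n Δ (p.1+p.2)) with hf_def
  have hDfin : D.Finite := by
    apply Set.Finite.subset ((S ×ˢ S).finite_toSet)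
    intro pq hpq
    simp only [Finset.coe_product, Set.mem_prod]
    exact ⟨hpq.1, hpq.2.1⟩
  have himg : f '' ↑T ⊆ D := by
    rintro pq ⟨⟨t, j⟩, hmem, rfl⟩
    have hm' := Finset.mem_coe.1 hmem
    rw [hT_def, Finset.mem_product, Finset.mem_Icc, Finset.mem_Icc] at hm'
    obtain ⟨⟨ht1, ht2⟩, hj1, hj2⟩ := hm'
    have hKΔ : (K:ℝ) ≤ Δ := le_trans (by exact_mod_cast Nat.cast_le.2 (min_le_left _ _ : K ≤ ⌊Δ⌋₊)) (Nat.floor_le hΔ0.le)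
    apply delaunay_main n hn0 Δ hΔ0
    · exact Finset.mem_Icc.2 ⟨ht1, by omega⟩
    · exact Finset.mem_Icc.2 ⟨by omega, by omega⟩
    · omega
    · have hjabs : |(t:ℝ) - ((t+j:ℕ):ℝ)| = (j:ℝ) := by
        have he : (t:ℝ) - ((t+j:ℕ):ℝ) = -(j:ℝ) := by push_cast; ring
        rw [he, abs_neg, abs_of_nonneg (by positivity)]
      rw [hjabs]
      have hjK : (j:ℝ) ≤ K := by exact_mod_cast hj2
      nlinarith
  have hinj : Set.InjOn f ↑T := by
    rintro ⟨t, j⟩ _ ⟨t', j'⟩ _ h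
    have h1 : helixPointD n Δ t = helixPointD n Δ t' := congrArg Prod.fst h
    have h2 : helixPointD n Δ (t+j) = helixPointD n Δ (t'+j') := congrArg Prod.snd h
    have e1 := helix_inj hn0 h1
    have e2 := helix_inj hn0 h2
    simp only [Prod.mk.injEq]
    omega
  have hcard : (f '' ↑T).ncard = (n-K) * K := by
    rw [Set.ncard_image_of_injOn hinj, Set.ncard_coe_finset, hT_def, Finset.card_product,
      Nat.card_Icc, Nat.card_Icc]
    congr 1 <;> omega
  have hle : (n-K) * K ≤ D.ncard := by
    rw [← hcard]; exact Set.ncard_le_ncard himg hDfin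
  have hcnt : ((n-K) * K) / 2 ≤ delaunayEdgeCount S := Nat.div_le_div_right hle
  -- real estimates
  have hKR4 : Δ/4 ≤ (K:ℝ) := by
    rcases min_cases (⌊Δ⌋₊) (n/2) with ⟨hmin, _⟩ | ⟨hmin, _⟩
    · rw [hK_def, hmin]
      rcases le_or_gt Δ 2 with h | h
      · have : (1:ℝ) ≤ (⌊Δ⌋₊:ℝ) := by exact_mod_cast Nat.le_floor (by exact_mod_cast hΔ1)
        linarith
      · have := Nat.sub_one_lt_floor Δ
        linarith
    · rw [hK_def, hmin]
      have h1 : (n:ℝ) ≤ 2*((n/2:ℕ):ℝ) + 1 := by exact_mod_cast (by omega : n ≤ 2*(n/2) + 1)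
      have h2 : (4:ℝ) ≤ n := by norm_num; exact_mod_cast (by omega : 4 ≤ n)
      linarith
  have hKhalf : (K:ℝ) ≤ (n:ℝ)/2 := by
    calc (K:ℝ) ≤ ((n/2:ℕ):ℝ) := by exact_mod_cast hKn2
    _ ≤ (n:ℝ)/2 := by exact_mod_cast Nat.cast_div_le
  have hnK : (n:ℝ)/2 ≤ ((n-K:ℕ):ℝ) := by
    rw [Nat.cast_sub hKn]; linarith
  have hM : (n:ℝ)*Δ/8 ≤ (((n-K)*K:ℕ):ℝ) := by
    rw [Nat.cast_mul]
    have h1 : (0:ℝ) ≤ Δ/4 := by linarith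
    calc (n:ℝ)*Δ/8 = ((n:ℝ)/2) * (Δ/4) := by ring
    _ ≤ ((n-K:ℕ):ℝ) * (K:ℝ) := by
        apply mul_le_mul hnK hKR4 h1 (by linarith)
  have hc2 : (((n-K)*K:ℕ):ℝ) ≤ 2*((((n-K)*K)/2:ℕ):ℝ) + 1 := by
    exact_mod_cast (by omega : (n-K)*K ≤ 2*(((n-K)*K)/2) + 1)
  have hfin : ((((n-K)*K)/2:ℕ):ℝ) ≤ (delaunayEdgeCount S : ℝ) := by exact_mod_cast hcnt
  have h16 : (16:ℝ) ≤ (n:ℝ)*Δ := by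
    have : (16:ℝ) ≤ (n:ℝ) := by exact_mod_cast hn
    nlinarith
  nlinarith


lemma helix_dist_sq_abs (n : ℕ) {Δ : ℝ} (hΔ0 : 0 < Δ) (t u : ℕ) :
    dist (helixPointD n Δ t) (helixPointD n Δ u) ^ 2
      = (|(t:ℝ)-u|/n)^2 + 2 - 2*Real.cos (|(t:ℝ)-u|/Δ) := by
  have h1 : Real.cos (((t:ℝ)-u)/Δ) = Real.cos (|(t:ℝ)-u|/Δ) := by
    rw [← Real.cos_abs ((((t:ℝ)-u))/Δ), abs_div, abs_of_pos hΔ0]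
  rw [helix_dist_sq, h1, div_pow, div_pow, sq_abs]

lemma nat_abs_ge_one {t u : ℕ} (h : t ≠ u) : (1:ℝ) ≤ |(t:ℝ) - u| := by
  rcases lt_or_gt_of_ne h with h' | h'
  · have hle : (t:ℝ) ≤ u := by exact_mod_cast h'.le
    have hlt : (t:ℝ) + 1 ≤ u := by exact_mod_cast h'
    rw [abs_sub_comm, abs_of_nonneg (sub_nonneg.2 hle)]
    linarith
  · have hle : (u:ℝ) ≤ t := by exact_mod_cast h'.le
    have hlt : (u:ℝ) + 1 ≤ t := by exact_mod_cast h'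
    rw [abs_of_nonneg (sub_nonneg.2 hle)]
    linarith

set_option maxHeartbeats 2000000 in
lemma spread_bounds (n : ℕ) (hn : 16 ≤ n) (Δ : ℝ) (hΔs : Real.sqrt n ≤ Δ) (hΔn : Δ ≤ n) :
    (1/4:ℝ)*Δ ≤ spread (helixSampleD n Δ) ∧ spread (helixSampleD n Δ) ≤ 10*Δ := by
  have hπ := Real.pi_pos
  have hπ2 : (2:ℝ) ≤ π := Real.two_le_pi
  have hn0 : 0 < n := by omega
  have hnR : (0:ℝ) < n := by exact_mod_cast hn0
  have hΔ1 : (1:ℝ) ≤ Δ := by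
    refine le_trans ?_ hΔs
    rw [show (1:ℝ) = Real.sqrt 1 by simp]
    exact Real.sqrt_le_sqrt (by exact_mod_cast hn0)
  have hΔ0 : (0:ℝ) < Δ := by linarith
  have hΔsq : (n:ℝ) ≤ Δ^2 := by
    rw [← Real.sq_sqrt (Nat.cast_nonneg n)]
    exact pow_le_pow_left₀ (Real.sqrt_nonneg _) hΔs 2
  set S := helixSampleD n Δ with hS_def
  have hmem : ∀ v : ℕ, v ∈ Finset.Icc 1 n → helixPointD n Δ v ∈ S := by
    intro v hv; exact Finset.mem_image_of_mem _ hv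
  have mem1 : helixPointD n Δ 1 ∈ S := hmem 1 (Finset.mem_Icc.2 ⟨le_refl _, by omega⟩)
  have mem2 : helixPointD n Δ 2 ∈ S := hmem 2 (Finset.mem_Icc.2 ⟨by omega, by omega⟩)
  have memn : helixPointD n Δ n ∈ S := hmem n (Finset.mem_Icc.2 ⟨by omega, le_refl _⟩)
  have hp12 : helixPointD n Δ 1 ≠ helixPointD n Δ 2 := by
    intro h; have := helix_inj hn0 h; omega
  set Dset := {d : ℝ | ∃ p ∈ S, ∃ q ∈ S, p ≠ q ∧ d = dist p q} with hDset_def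
  have hmem12 : dist (helixPointD n Δ 1) (helixPointD n Δ 2) ∈ Dset :=
    ⟨_, mem1, _, mem2, hp12, rfl⟩
  have hlb : ∀ dd ∈ Dset, 1/(π*Δ) ≤ dd := by
    rintro dd ⟨p, hp, q, hq, hpq, rfl⟩
    obtain ⟨t, hts, rfl⟩ := Finset.mem_image.1 hp
    obtain ⟨u, hus, rfl⟩ := Finset.mem_image.1 hq
    have htu : t ≠ u := fun h => hpq (by rw [h])
    have hk1 : (1:ℝ) ≤ |(t:ℝ)-u| := nat_abs_ge_one htu
    set k := |(t:ℝ)-u| with hk_def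
    have hk0 : (0:ℝ) < k := by linarith
    have hsqf := helix_dist_sq_abs n hΔ0 t u
    have hgoal : (1/(π*Δ))^2 ≤ dist (helixPointD n Δ t) (helixPointD n Δ u) ^ 2 := by
      rcases le_or_gt Δ k with hc | hc
      · have hfrac : 1/(π*Δ) ≤ k/n := by
          rw [div_le_div_iff₀ (by positivity) hnR]
          have e1 : Δ*(π*Δ) ≤ k*(π*Δ) := mul_le_mul_of_nonneg_right hc (by positivity)
          have e2 : 2*Δ ≤ π*Δ := mul_le_mul_of_nonneg_right hπ2 hΔ0.le
          have e3 : Δ*(2*Δ) ≤ Δ*(π*Δ) := mul_le_mul_of_nonneg_left e2 hΔ0.le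
          nlinarith
        have := pow_le_pow_left₀ (by positivity : (0:ℝ) ≤ 1/(π*Δ)) hfrac 2
        rw [hsqf, ← hk_def]
        have hcc := Real.cos_le_one (k/Δ)
        linarith
      · set θ := k/(2*Δ) with hθ_def
        have hθ0 : 0 < θ := by positivity
        have hθh : θ ≤ 1/2 := by rw [hθ_def, div_le_iff₀ (by positivity)]; linarith
        have hsin : 2/π*θ ≤ Real.sin θ := Real.mul_le_sin hθ0.le (by linarith)
        have h2c : 2 - 2*Real.cos (k/Δ) = 4 * Real.sin θ^2 := by
          have := Real.sin_sq_eq_half_sub θ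
          rw [show 2*θ = k/Δ by rw [hθ_def]; field_simp] at this
          linarith
        have h5 : 1/(π*Δ) ≤ 2*Real.sin θ := by
          have e1 : 2*(2/π*θ) = 2*k/(π*Δ) := by rw [hθ_def]; field_simp
          have e2 : 1/(π*Δ) ≤ 2*k/(π*Δ) := by gcongr; linarith
          linarith
        have h6 := pow_le_pow_left₀ (by positivity : (0:ℝ) ≤ 1/(π*Δ)) h5 2
        rw [hsqf, ← hk_def]
        have he : (2*Real.sin θ)^2 = 4*Real.sin θ^2 := by ring
        nlinarith [sq_nonneg (k/(n:ℝ)), h2c, h6, he]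
    exact le_of_pow_le_pow_left₀ two_ne_zero dist_nonneg hgoal
  have hbdd : BddBelow Dset := by
    refine ⟨0, ?_⟩
    rintro dd ⟨p, hp, q, hq, hpq, rfl⟩
    exact dist_nonneg
  have hmpd_lb : 1/(π*Δ) ≤ minPairDist S := le_csInf ⟨_, hmem12⟩ hlb
  have hmpd_ub : minPairDist S ≤ dist (helixPointD n Δ 1) (helixPointD n Δ 2) :=
    csInf_le hbdd hmem12
  have hd12 : dist (helixPointD n Δ 1) (helixPointD n Δ 2) ≤ 2/Δ := by
    have hsqf := helix_dist_sq_abs n hΔ0 1 2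
    have habs : |((1:ℕ):ℝ)-((2:ℕ):ℝ)| = 1 := by norm_num
    rw [habs] at hsqf
    have hcos := Real.one_sub_sq_div_two_le_cos (x := 1/Δ)
    have h1n : (1:ℝ)/n ≤ 1/Δ := by
      apply one_div_le_one_div_of_le hΔ0 hΔn
    apply le_of_pow_le_pow_left₀ two_ne_zero (by positivity)
    rw [hsqf]
    have e1 : ((1:ℝ)/n)^2 ≤ (1/Δ)^2 := pow_le_pow_left₀ (by positivity) h1n 2
    have e2 : ((2:ℝ)/Δ)^2 = 4*(1/Δ)^2 := by ring
    nlinarith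
  have hdiam_ub : Metric.diam (↑S : Set E3) ≤ 3 := by
    apply Metric.diam_le_of_forall_dist_le (by norm_num)
    intro p hp q hq
    obtain ⟨t, hts, rfl⟩ := Finset.mem_image.1 (Finset.mem_coe.1 hp)
    obtain ⟨u, hus, rfl⟩ := Finset.mem_image.1 (Finset.mem_coe.1 hq)
    rw [Finset.mem_Icc] at hts hus
    have hsqf := helix_dist_sq_abs n hΔ0 t u
    have hkn : |(t:ℝ)-u| ≤ n := by
      rw [abs_le]
      have h1 : (t:ℝ) ≤ n := by exact_mod_cast hts.2
      have h2 : (u:ℝ) ≤ n := by exact_mod_cast hus.2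
      have h3 : (0:ℝ) ≤ t := Nat.cast_nonneg t
      have h4 : (0:ℝ) ≤ u := Nat.cast_nonneg u
      constructor <;> linarith
    have hfr : |(t:ℝ)-u|/n ≤ 1 := by rw [div_le_one hnR]; exact hkn
    have hcos := Real.neg_one_le_cos (|(t:ℝ)-u|/Δ)
    apply le_of_pow_le_pow_left₀ two_ne_zero (by norm_num)
    rw [hsqf]
    have : (|(t:ℝ)-u|/n)^2 ≤ 1 := by
      rw [← one_pow 2]; exact pow_le_pow_left₀ (by positivity) hfr 2
    nlinarith
  have hb : Bornology.IsBounded (↑S : Set E3) := S.finite_toSet.isBounded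
  have hdiam_lb : (1/2:ℝ) ≤ Metric.diam (↑S : Set E3) := by
    have h1n := Metric.dist_le_diam_of_mem hb mem1 memn
    have hsqf := helix_dist_sq_abs n hΔ0 1 n
    have habs : |((1:ℕ):ℝ)-(n:ℝ)| = (n:ℝ)-1 := by
      rw [abs_sub_comm, abs_of_nonneg]
      · norm_num
      · have : (1:ℝ) ≤ n := by exact_mod_cast hn0
        norm_num; linarith
    rw [habs] at hsqf
    have hdge : ((n:ℝ)-1)/n ≤ dist (helixPointD n Δ 1) (helixPointD n Δ n) := by
      apply le_of_pow_le_pow_left₀ two_ne_zero dist_nonneg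
      rw [hsqf]
      have hcos := Real.cos_le_one (((n:ℝ)-1)/Δ)
      nlinarith
    have hhalf : (1/2:ℝ) ≤ ((n:ℝ)-1)/n := by
      rw [le_div_iff₀ hnR]
      have : (16:ℝ) ≤ n := by exact_mod_cast hn
      linarith
    linarith
  have hmpd_pos : 0 < minPairDist S := lt_of_lt_of_le (by positivity) hmpd_lb
  have hmpd_ub2 : minPairDist S ≤ 2/Δ := le_trans hmpd_ub hd12
  constructor
  · rw [spread, le_div_iff₀ hmpd_pos]
    have h1 : 1/4*Δ*(minPairDist S) ≤ 1/4*Δ*(2/Δ) := by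
      apply mul_le_mul_of_nonneg_left hmpd_ub2 (by positivity)
    have h2 : 1/4*Δ*(2/Δ) = 1/2 := by field_simp; ring
    linarith
  · rw [spread, div_le_iff₀ hmpd_pos]
    have h1 : 10*Δ*(1/(π*Δ)) ≤ 10*Δ*(minPairDist S) := by
      apply mul_le_mul_of_nonneg_left hmpd_lb (by positivity)
    have h2 : 10*Δ*(1/(π*Δ)) = 10/π := by field_simp
    have h3 : (3:ℝ) ≤ 10/π := by
      rw [le_div_iff₀ hπ]
      have := Real.pi_lt_d2
      linarith
    linarith

/-- For all sufficiently large `n` and every `Δ` with `√n ≤ Δ ≤ n`: any two distinct points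
of `S_Δ` whose parameters differ by less than `2πΔ` form a Delaunay edge; consequently `S_Δ`
has at least `c·nΔ` Delaunay edges, and the spread of `S_Δ` is `Θ(Δ)`. -/
theorem helixSampleD_lowerbound :
    ∃ c : ℝ, 0 < c ∧ ∃ c₁ : ℝ, 0 < c₁ ∧ ∃ c₂ : ℝ, 0 < c₂ ∧ ∃ n₀ : ℕ,
      ∀ n : ℕ, n₀ ≤ n → ∀ Δ : ℝ, Real.sqrt n ≤ Δ → Δ ≤ n →
        (∀ t ∈ Finset.Icc 1 n, ∀ u ∈ Finset.Icc 1 n, t ≠ u →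
            |(t : ℝ) - (u : ℝ)| < 2 * Real.pi * Δ →
            IsDelaunayEdge (helixSampleD n Δ) (helixPointD n Δ t) (helixPointD n Δ u)) ∧
        c * n * Δ ≤ (delaunayEdgeCount (helixSampleD n Δ) : ℝ) ∧
        c₁ * Δ ≤ spread (helixSampleD n Δ) ∧ spread (helixSampleD n Δ) ≤ c₂ * Δ := by
  refine ⟨1/32, by norm_num, 1/4, by norm_num, 10, by norm_num, 16, ?_⟩
  intro n hn Δ hΔs hΔn
  have hn0 : 0 < n := by omega
  have hΔ0 : 0 < Δ := by
    have h1 : (0:ℝ) < Real.sqrt n := Real.sqrt_pos.2 (by exact_mod_cast hn0)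
    linarith
  exact ⟨fun t ht u hu hne hclose => delaunay_main n hn0 Δ hΔ0 t u ht hu hne hclose,
    count_lemma n hn Δ hΔs hΔn, (spread_bounds n hn Δ hΔs hΔn).1, (spread_bounds n hn Δ hΔs hΔn).2⟩
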